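/- arXiv:1906.03486 — 4 statements merged into one kernel-verified Lean document; each statement's English description precedes it below -/
import Mathlib

section
/- Let μ be a σ-finite measure on a measurable space (X, F) and let P₀, P₁ be probability measures on (X, F) with densities p₀, p₁ with respect to μ. Set A = {x ∈ X : p₀(x) ≥ p₁(x)/2}. Then for every measurable test ψ : X → {0,1} one has max(P₀(ψ = 1), P₁(ψ = 0)) ≥ (1/3) P₁(A). -/
open MeasureTheory
open scoped ENNReal

/-- Likelihood-ratio testing bound: if `P₀, P₁` have densities `p₀, p₁` with respect to a
σ-finite measure `μ` and `A = {p₀ ≥ p₁/2}`, then every measurable test (identified with the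
measurable set `B` where it equals 1) satisfies `max(P₀(B), P₁(Bᶜ)) ≥ P₁(A)/3`. -/
theorem stmt_1 {X : Type*} [MeasurableSpace X] (μ : Measure X) [SigmaFinite μ]
    (p₀ p₁ : X → ℝ) (hp₀m : Measurable p₀) (hp₁m : Measurable p₁)
    (hp₀ : ∀ x, 0 ≤ p₀ x) (hp₁ : ∀ x, 0 ≤ p₁ x)
    (P₀ P₁ : Measure X)
    (hP₀ : P₀ = μ.withDensity fun x => ENNReal.ofReal (p₀ x))
    (hP₁ : P₁ = μ.withDensity fun x => ENNReal.ofReal (p₁ x))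
    [IsProbabilityMeasure P₀] [IsProbabilityMeasure P₁] :
    ∀ B : Set X, MeasurableSet B →
      P₁ {x | p₁ x / 2 ≤ p₀ x} / 3 ≤ max (P₀ B) (P₁ Bᶜ) := by
  intro B hB
  set A : Set X := {x | p₁ x / 2 ≤ p₀ x} with hA
  have hAm : MeasurableSet A := measurableSet_le (hp₁m.div_const 2) hp₀m
  have h1 : P₁ A ≤ P₁ (A ∩ B) + P₁ Bᶜ := by
    calc P₁ A ≤ P₁ ((A ∩ B) ∪ Bᶜ) := measure_mono (by
          intro x hx; by_cases hxB : x ∈ B <;> simp [hx, hxB])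
      _ ≤ P₁ (A ∩ B) + P₁ Bᶜ := measure_union_le _ _
  have h2 : P₁ (A ∩ B) ≤ 2 * P₀ B := by
    rw [hP₀, hP₁, withDensity_apply _ (hAm.inter hB), withDensity_apply _ hB]
    calc ∫⁻ x in A ∩ B, ENNReal.ofReal (p₁ x) ∂μ
        ≤ ∫⁻ x in A ∩ B, 2 * ENNReal.ofReal (p₀ x) ∂μ := by
          refine setLIntegral_mono' (hAm.inter hB) fun x hx => ?_
          have hx1 : p₁ x / 2 ≤ p₀ x := hx.1
          have h : p₁ x ≤ 2 * p₀ x := by linarith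
          calc ENNReal.ofReal (p₁ x) ≤ ENNReal.ofReal (2 * p₀ x) :=
                ENNReal.ofReal_le_ofReal h
            _ = 2 * ENNReal.ofReal (p₀ x) := by
                rw [ENNReal.ofReal_mul (by norm_num)]; norm_num
      _ = 2 * ∫⁻ x in A ∩ B, ENNReal.ofReal (p₀ x) ∂μ :=
          lintegral_const_mul' 2 _ (by norm_num)
      _ ≤ 2 * ∫⁻ x in B, ENNReal.ofReal (p₀ x) ∂μ :=
          mul_le_mul_right (lintegral_mono_set Set.inter_subset_right) 2
  have h3 : P₁ A ≤ 3 * max (P₀ B) (P₁ Bᶜ) := by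
    calc P₁ A ≤ 2 * P₀ B + P₁ Bᶜ := h1.trans (add_le_add_left h2 _)
      _ ≤ 2 * max (P₀ B) (P₁ Bᶜ) + max (P₀ B) (P₁ Bᶜ) :=
          add_le_add (mul_le_mul_right (le_max_left _ _) 2) (le_max_right _ _)
      _ = 3 * max (P₀ B) (P₁ Bᶜ) := by ring
  rw [ENNReal.div_le_iff (by norm_num) (by norm_num)]
  rw [mul_comm] at h3
  exact h3
end

section
/- Let μ be a σ-finite measure on a measurable space (X, F) and let P₀, P₁ be probability measures on (X, F) with densities p₀, p₁ with respect to μ, such that P₁ is absolutely continuous with respect to P₀ and the Kullback–Leibler divergence K := K(P₁, P₀) = ∫ log(p₁/p₀) dP₁ is finite. Then for every measurable test ψ : X → {0,1}, max(P₀(ψ = 1), P₁(ψ = 0)) ≥ (1/3)(1 − (K + √(2K))/log 2). In particular, there exists μ₀ > 0 such that if K ≤ μ₀ then every test incurs maximal error probability greater than 1/4. -/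
open MeasureTheory
open scoped ENNReal

private theorem pw1 (p q : ℝ) (hp : 0 ≤ p) (hq : 0 < q) :
    (Real.sqrt p - Real.sqrt q)^2 ≤ p * Real.log (p/q) - p + q := by
  rcases eq_or_lt_of_le hp with h | hp
  · simp [← h, Real.sq_sqrt hq.le]
  · have h1 : Real.log (p/q) = 2 * (Real.log (Real.sqrt p) - Real.log (Real.sqrt q)) := by
      rw [Real.log_sqrt hp.le, Real.log_sqrt hq.le, Real.log_div hp.ne' hq.ne']
      ring
    have h2 : Real.log (Real.sqrt p) - Real.log (Real.sqrt q)
        = - Real.log (Real.sqrt q / Real.sqrt p) := by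
      rw [Real.log_div (by positivity) (by positivity)]; ring
    have h3 : Real.log (Real.sqrt q / Real.sqrt p) ≤ Real.sqrt q / Real.sqrt p - 1 :=
      Real.log_le_sub_one_of_pos (by positivity)
    have hsp : (0:ℝ) < Real.sqrt p := Real.sqrt_pos.2 hp
    have key : p * Real.log (p/q) ≥ 2 * p * (1 - Real.sqrt q / Real.sqrt p) := by
      rw [h1, h2]; nlinarith [h3, hp]
    have hps : Real.sqrt p ^ 2 = p := Real.sq_sqrt hp.le
    have hqs : Real.sqrt q ^ 2 = q := Real.sq_sqrt hq.le
    have : p * (Real.sqrt q / Real.sqrt p) = Real.sqrt p * Real.sqrt q := by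
      rw [mul_div_assoc', div_eq_iff hsp.ne']; linear_combination (-(Real.sqrt q)) * hps
    nlinarith [key, hps, hqs, this]

private theorem integral_wd {X : Type*} [MeasurableSpace X] (μ : Measure X) {p : X → ℝ}
    (hpm : Measurable p) (hp : ∀ x, 0 ≤ p x) (g : X → ℝ) :
    ∫ x, g x ∂(μ.withDensity fun x => ENNReal.ofReal (p x)) = ∫ x, p x * g x ∂μ := by
  rw [show (fun x => ENNReal.ofReal (p x)) = (fun x => ((p x).toNNReal : ℝ≥0∞)) from rfl,
      integral_withDensity_eq_integral_smul hpm.real_toNNReal]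
  congr 1; ext x
  simp [NNReal.smul_def, Real.coe_toNNReal _ (hp x)]

private theorem integrable_wd {X : Type*} [MeasurableSpace X] {μ : Measure X} {p : X → ℝ}
    (hpm : Measurable p) (hp : ∀ x, 0 ≤ p x) {g : X → ℝ}
    (hg : Integrable g (μ.withDensity fun x => ENNReal.ofReal (p x))) :
    Integrable (fun x => p x * g x) μ := by
  have h := (integrable_withDensity_iff hpm.ennreal_ofReal
      (ae_of_all _ fun x => ENNReal.ofReal_lt_top)).1 hg
  have : (fun x => g x * (ENNReal.ofReal (p x)).toReal) = fun x => p x * g x := by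
    ext x; rw [ENNReal.toReal_ofReal (hp x)]; ring
  rwa [this] at h
/-- Two-point testing lower bound via the Kullback–Leibler divergence: if `P₁ ≪ P₀` and
`K = K(P₁, P₀) = ∫ log(p₁/p₀) dP₁` is finite, then every measurable test `B` has maximal
error probability at least `(1/3)(1 − (K + √(2K))/log 2)`; in particular there is a
universal `μ₀ > 0` such that `K ≤ μ₀` forces the maximal error probability of every test
to exceed `1/4`. -/
theorem stmt_3 {X : Type*} [MeasurableSpace X] (μ : Measure X) [SigmaFinite μ]
    (p₀ p₁ : X → ℝ) (hp₀m : Measurable p₀) (hp₁m : Measurable p₁)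
    (hp₀ : ∀ x, 0 ≤ p₀ x) (hp₁ : ∀ x, 0 ≤ p₁ x)
    (P₀ P₁ : Measure X)
    (hP₀ : P₀ = μ.withDensity fun x => ENNReal.ofReal (p₀ x))
    (hP₁ : P₁ = μ.withDensity fun x => ENNReal.ofReal (p₁ x))
    [IsProbabilityMeasure P₀] [IsProbabilityMeasure P₁]
    (hac : P₁ ≪ P₀)
    (hint : Integrable (fun x => Real.log (p₁ x / p₀ x)) P₁)
    (K : ℝ) (hK : K = ∫ x, Real.log (p₁ x / p₀ x) ∂P₁) :
    (∀ B : Set X, MeasurableSet B →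
        (1 / 3) * (1 - (K + Real.sqrt (2 * K)) / Real.log 2)
          ≤ max (P₀ B).toReal (P₁ Bᶜ).toReal) ∧
    ∃ μ₀ : ℝ, 0 < μ₀ ∧ (K ≤ μ₀ →
      ∀ B : Set X, MeasurableSet B →
        (1 / 4 : ℝ) < max (P₀ B).toReal (P₁ Bᶜ).toReal) := by
  classical
  set f : X → ℝ := fun x => Real.log (p₁ x / p₀ x) with hf
  -- measures of sets as set lintegrals
  have hP₀s : ∀ (s : Set X), MeasurableSet s → P₀ s = ∫⁻ x in s, ENNReal.ofReal (p₀ x) ∂μ := by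
    intro s hs; rw [hP₀, withDensity_apply _ hs]
  have hP₁s : ∀ (s : Set X), MeasurableSet s → P₁ s = ∫⁻ x in s, ENNReal.ofReal (p₁ x) ∂μ := by
    intro s hs; rw [hP₁, withDensity_apply _ hs]
  -- integrability and total mass of densities
  have hint_p₁ : Integrable p₁ μ := by
    have := integrable_wd hp₁m hp₁ (g := fun _ => (1:ℝ))
      (by rw [← hP₁]; exact integrable_const 1)
    simpa using this
  have hint_p₀ : Integrable p₀ μ := by
    have := integrable_wd hp₀m hp₀ (g := fun _ => (1:ℝ))
      (by rw [← hP₀]; exact integrable_const 1)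
    simpa using this
  have hI₁ : ∫ x, p₁ x ∂μ = 1 := by
    have h := integral_wd μ hp₁m hp₁ (fun _ => (1:ℝ))
    rw [← hP₁] at h
    simpa using h.symm
  have hI₀ : ∫ x, p₀ x ∂μ = 1 := by
    have h := integral_wd μ hp₀m hp₀ (fun _ => (1:ℝ))
    rw [← hP₀] at h
    simpa using h.symm
  -- a.e. vanishing of p₁ where p₀ vanishes
  have hS : MeasurableSet {x | p₀ x = 0} := hp₀m (measurableSet_singleton 0)
  have hP₀S : P₀ {x | p₀ x = 0} = 0 := by
    rw [hP₀s _ hS]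
    have : ∫⁻ x in {x | p₀ x = 0}, ENNReal.ofReal (p₀ x) ∂μ
        = ∫⁻ x in {x | p₀ x = 0}, 0 ∂μ := by
      refine setLIntegral_congr_fun hS (fun x hx => ?_)
      simp only [ENNReal.ofReal_eq_zero]
      exact le_of_eq hx
    rw [this, lintegral_zero]
  have hP₁S : P₁ {x | p₀ x = 0} = 0 := hac hP₀S
  have hq0 : ∀ᵐ x ∂μ, p₀ x = 0 → p₁ x = 0 := by
    rw [hP₁s _ hS] at hP₁S
    have h := (lintegral_eq_zero_iff hp₁m.ennreal_ofReal).1 hP₁S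
    have h2 := (ae_restrict_iff' hS).1 h
    filter_upwards [h2] with x hx h0
    have h3 : ENNReal.ofReal (p₁ x) = 0 := hx h0
    rw [ENNReal.ofReal_eq_zero] at h3
    exact le_antisymm h3 (hp₁ x)
  have hq0P₁ : ∀ᵐ x ∂P₁, 0 < p₀ x := by
    rw [ae_iff]
    have : {x | ¬ 0 < p₀ x} = {x | p₀ x = 0} := by
      ext x; simp only [Set.mem_setOf_eq, not_lt]
      constructor
      · intro h; exact le_antisymm h (hp₀ x)
      · intro h; exact h.le
    rw [this]; exact hP₁S
  -- transfer of the KL integral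
  have hintK : Integrable (fun x => p₁ x * f x) μ := integrable_wd hp₁m hp₁ (hP₁ ▸ hint)
  have hKμ : ∫ x, p₁ x * f x ∂μ = K := by
    rw [hK, hP₁, integral_wd μ hp₁m hp₁]
  -- square-root functions and Hellinger bound
  set u : X → ℝ := fun x => Real.sqrt (p₁ x) - Real.sqrt (p₀ x) with hu
  set v : X → ℝ := fun x => Real.sqrt (p₁ x) + Real.sqrt (p₀ x) with hv
  have hpw : ∀ᵐ x ∂μ, u x ^ 2 ≤ p₁ x * f x - p₁ x + p₀ x := by
    filter_upwards [hq0] with x hx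
    rcases (hp₀ x).eq_or_lt with h | h
    · have h1 : p₁ x = 0 := hx h.symm
      simp [hu, hf, ← h, h1]
    · exact pw1 _ _ (hp₁ x) h
  have hint_sub : Integrable (fun x => p₁ x * f x - p₁ x) μ := hintK.sub hint_p₁
  have hintR : Integrable (fun x => p₁ x * f x - p₁ x + p₀ x) μ := hint_sub.add hint_p₀
  have hIR : ∫ x, (p₁ x * f x - p₁ x + p₀ x) ∂μ = K := by
    rw [integral_add hint_sub hint_p₀, integral_sub hintK hint_p₁, hKμ, hI₁, hI₀]
    ring
  have hmsp : MemLp (fun x => Real.sqrt (p₁ x)) 2 μ := by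
    rw [memLp_two_iff_integrable_sq (hp₁m.sqrt.aestronglyMeasurable)]
    exact hint_p₁.congr (ae_of_all _ fun x => (Real.sq_sqrt (hp₁ x)).symm)
  have hmsq : MemLp (fun x => Real.sqrt (p₀ x)) 2 μ := by
    rw [memLp_two_iff_integrable_sq (hp₀m.sqrt.aestronglyMeasurable)]
    exact hint_p₀.congr (ae_of_all _ fun x => (Real.sq_sqrt (hp₀ x)).symm)
  have hmu : MemLp u 2 μ := hmsp.sub hmsq
  have hmv : MemLp v 2 μ := hmsp.add hmsq
  have hint_u2 : Integrable (fun x => u x ^ 2) μ :=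
    (memLp_two_iff_integrable_sq hmu.aestronglyMeasurable).1 hmu
  have hint_v2 : Integrable (fun x => v x ^ 2) μ :=
    (memLp_two_iff_integrable_sq hmv.aestronglyMeasurable).1 hmv
  have hG : ∫ x, u x ^ 2 ∂μ ≤ K := by
    rw [← hIR]; exact integral_mono_ae hint_u2 hintR hpw
  have hK0 : 0 ≤ K := le_trans (integral_nonneg fun x => sq_nonneg _) hG
  -- ∫ √p₁ √p₀ ≤ 1
  have hspsq_le : ∀ x, Real.sqrt (p₁ x) * Real.sqrt (p₀ x) ≤ (p₁ x + p₀ x) / 2 := by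
    intro x
    nlinarith [sq_nonneg (Real.sqrt (p₁ x) - Real.sqrt (p₀ x)), Real.sq_sqrt (hp₁ x),
      Real.sq_sqrt (hp₀ x)]
  have hhalf : Integrable (fun x => (p₁ x + p₀ x) / 2) μ := (hint_p₁.add hint_p₀).div_const 2
  have hint_spsq : Integrable (fun x => Real.sqrt (p₁ x) * Real.sqrt (p₀ x)) μ := by
    refine Integrable.mono hhalf
      (hp₁m.sqrt.mul hp₀m.sqrt).aestronglyMeasurable (ae_of_all _ fun x => ?_)
    rw [Real.norm_of_nonneg (by positivity),
      Real.norm_of_nonneg (div_nonneg (add_nonneg (hp₁ x) (hp₀ x)) (by norm_num))]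
    exact hspsq_le x
  have hIspsq : ∫ x, Real.sqrt (p₁ x) * Real.sqrt (p₀ x) ∂μ ≤ 1 := by
    calc ∫ x, Real.sqrt (p₁ x) * Real.sqrt (p₀ x) ∂μ
        ≤ ∫ x, (p₁ x + p₀ x) / 2 ∂μ :=
          integral_mono hint_spsq hhalf hspsq_le
      _ = 1 := by rw [integral_div, integral_add hint_p₁ hint_p₀, hI₁, hI₀]; norm_num
  have hIv2 : ∫ x, v x ^ 2 ∂μ ≤ 4 := by
    have hveq : ∀ x, v x ^ 2 = p₁ x + 2 * (Real.sqrt (p₁ x) * Real.sqrt (p₀ x)) + p₀ x := by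
      intro x
      have := Real.sq_sqrt (hp₁ x); have := Real.sq_sqrt (hp₀ x)
      simp only [hv]; nlinarith
    calc ∫ x, v x ^ 2 ∂μ
        = ∫ x, (p₁ x + 2 * (Real.sqrt (p₁ x) * Real.sqrt (p₀ x)) + p₀ x) ∂μ :=
          integral_congr_ae (ae_of_all _ hveq)
      _ = 1 + 2 * (∫ x, Real.sqrt (p₁ x) * Real.sqrt (p₀ x) ∂μ) + 1 := by
          have h1 : Integrable (fun x => 2 * (Real.sqrt (p₁ x) * Real.sqrt (p₀ x))) μ :=
            hint_spsq.const_mul 2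
          have h2 : Integrable (fun x => p₁ x + 2 * (Real.sqrt (p₁ x) * Real.sqrt (p₀ x))) μ :=
            hint_p₁.add h1
          rw [integral_add h2 hint_p₀, integral_add hint_p₁ h1, integral_const_mul, hI₁, hI₀]
      _ ≤ 4 := by linarith
  -- Cauchy–Schwarz: total variation bound
  have hTV : ∫ x, |p₁ x - p₀ x| ∂μ ≤ Real.sqrt K * 2 := by
    have h2 : (ENNReal.ofReal (2:ℝ)) = 2 := by norm_num
    have hold := integral_mul_norm_le_Lp_mul_Lq (μ := μ)
      (Real.HolderConjugate.two_two : Real.HolderConjugate 2 2)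
      (by rw [h2]; exact hmu) (by rw [h2]; exact hmv)
    have hnorm : ∀ x, |p₁ x - p₀ x| = ‖u x‖ * ‖v x‖ := by
      intro x
      rw [Real.norm_eq_abs, Real.norm_eq_abs, ← abs_mul]
      congr 1
      have h1 := Real.sq_sqrt (hp₁ x)
      have h0 := Real.sq_sqrt (hp₀ x)
      simp only [hu, hv]
      nlinarith
    have hru : ∀ (w : X → ℝ) (x : X), ‖w x‖ ^ (2:ℝ) = w x ^ 2 := by
      intro w x
      rw [Real.norm_eq_abs, show ((2:ℝ)) = ((2:ℕ):ℝ) by norm_num, Real.rpow_natCast, sq_abs]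
    have hu2 : ∫ x, ‖u x‖ ^ (2:ℝ) ∂μ = ∫ x, u x ^ 2 ∂μ :=
      integral_congr_ae (ae_of_all _ fun x => hru u x)
    have hv2 : ∫ x, ‖v x‖ ^ (2:ℝ) ∂μ = ∫ x, v x ^ 2 ∂μ :=
      integral_congr_ae (ae_of_all _ fun x => hru v x)
    rw [hu2, hv2] at hold
    have hb1 : (∫ x, u x ^ 2 ∂μ) ^ (1/2:ℝ) ≤ Real.sqrt K := by
      rw [← Real.sqrt_eq_rpow]
      exact Real.sqrt_le_sqrt hG
    have hb2 : (∫ x, v x ^ 2 ∂μ) ^ (1/2:ℝ) ≤ 2 := by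
      rw [← Real.sqrt_eq_rpow]
      calc Real.sqrt (∫ x, v x ^ 2 ∂μ) ≤ Real.sqrt 4 := Real.sqrt_le_sqrt hIv2
        _ = 2 := by
          rw [show (4:ℝ) = 2^2 by norm_num, Real.sqrt_sq (by norm_num : (0:ℝ) ≤ 2)]
    have heq : ∫ x, |p₁ x - p₀ x| ∂μ = ∫ x, ‖u x‖ * ‖v x‖ ∂μ :=
      integral_congr_ae (ae_of_all _ hnorm)
    have hnn : 0 ≤ (∫ x, v x ^ 2 ∂μ) ^ (1/2:ℝ) := by
      rw [← Real.sqrt_eq_rpow]; exact Real.sqrt_nonneg _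
    calc ∫ x, |p₁ x - p₀ x| ∂μ = ∫ x, ‖u x‖ * ‖v x‖ ∂μ := heq
      _ ≤ (∫ x, u x ^ 2 ∂μ) ^ (1/2:ℝ) * (∫ x, v x ^ 2 ∂μ) ^ (1/2:ℝ) := hold
      _ ≤ Real.sqrt K * 2 := mul_le_mul hb1 hb2 hnn (Real.sqrt_nonneg _)
  -- the negative-part bound
  have hfneg_intP : Integrable (fun x => max (-(f x)) 0) P₁ := hint.neg.pos_part
  have hfneg_intμ : Integrable (fun x => p₁ x * max (-(f x)) 0) μ :=
    integrable_wd hp₁m hp₁ (hP₁ ▸ hfneg_intP)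
  have habs_int : Integrable (fun x => |p₁ x - p₀ x|) μ := (hint_p₁.sub hint_p₀).abs
  have hsub01 : Integrable (fun x => p₀ x - p₁ x) μ := hint_p₀.sub hint_p₁
  have hsum01 : Integrable (fun x => p₀ x - p₁ x + |p₁ x - p₀ x|) μ := hsub01.add habs_int
  have hgbound : Integrable (fun x => (p₀ x - p₁ x + |p₁ x - p₀ x|) / 2) μ :=
    hsum01.div_const 2
  have hpwneg : ∀ᵐ x ∂μ, p₁ x * max (-(f x)) 0 ≤ (p₀ x - p₁ x + |p₁ x - p₀ x|) / 2 := by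
    filter_upwards [hq0] with x hx
    rcases (hp₁ x).eq_or_lt with h1 | h1
    · rw [← h1, zero_mul]
      have habs : |0 - p₀ x| = p₀ x := by simp [abs_of_nonneg (hp₀ x)]
      rw [habs]
      linarith [hp₀ x]
    · have hq : 0 < p₀ x := by
        rcases (hp₀ x).eq_or_lt with h | h
        · exact absurd (hx h.symm) (ne_of_gt h1)
        · exact h
      have hflog : -(f x) = Real.log (p₀ x / p₁ x) := by
        simp only [hf]
        rw [← Real.log_inv, inv_div]
      have hlog_le : Real.log (p₀ x / p₁ x) ≤ p₀ x / p₁ x - 1 :=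
        Real.log_le_sub_one_of_pos (by positivity)
      have h5 : max (-(f x)) 0 ≤ max (p₀ x / p₁ x - 1) 0 := by
        rw [hflog]; exact max_le_max hlog_le le_rfl
      have h6 : p₁ x * max (p₀ x / p₁ x - 1) 0 = (p₀ x - p₁ x + |p₁ x - p₀ x|) / 2 := by
        rcases le_total (p₀ x) (p₁ x) with h | h
        · rw [max_eq_right (by rw [sub_nonpos, div_le_one h1]; exact h),
            abs_of_nonneg (by linarith)]
          ring
        · rw [max_eq_left (by rw [sub_nonneg, le_div_iff₀ h1]; linarith),
            abs_of_nonpos (by linarith)]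
          field_simp
          ring
      calc p₁ x * max (-(f x)) 0 ≤ p₁ x * max (p₀ x / p₁ x - 1) 0 :=
            mul_le_mul_of_nonneg_left h5 h1.le
        _ = (p₀ x - p₁ x + |p₁ x - p₀ x|) / 2 := h6
  have hInegμ : ∫ x, p₁ x * max (-(f x)) 0 ∂μ ≤ Real.sqrt K := by
    calc ∫ x, p₁ x * max (-(f x)) 0 ∂μ
        ≤ ∫ x, (p₀ x - p₁ x + |p₁ x - p₀ x|) / 2 ∂μ :=
          integral_mono_ae hfneg_intμ hgbound hpwneg
      _ = (1 - 1 + ∫ x, |p₁ x - p₀ x| ∂μ) / 2 := by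
          rw [integral_div, integral_add hsub01 habs_int, integral_sub hint_p₀ hint_p₁, hI₀, hI₁]
      _ ≤ Real.sqrt K := by linarith [hTV]
  have hInegP : ∫ x, max (-(f x)) 0 ∂P₁ ≤ Real.sqrt K := by
    have := integral_wd μ hp₁m hp₁ (fun x => max (-(f x)) 0)
    rw [← hP₁] at this
    rw [this]
    exact hInegμ
  -- the likelihood-ratio set and Markov's inequality
  set A : Set X := {x | p₁ x ≤ 2 * p₀ x} with hA_def
  have hA : MeasurableSet A := measurableSet_le hp₁m (hp₀m.const_mul 2)
  have hmark : Real.log 2 * (P₁ Aᶜ).toReal ≤ K + Real.sqrt K := by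
    have hconst : ∫ _ in Aᶜ, Real.log 2 ∂P₁ = (P₁ Aᶜ).toReal * Real.log 2 := by
      rw [setIntegral_const, smul_eq_mul]; rfl
    have hmono : ∫ _ in Aᶜ, Real.log 2 ∂P₁ ≤ ∫ x in Aᶜ, f x ∂P₁ := by
      refine setIntegral_mono_ae_restrict
        (integrableOn_const (measure_ne_top _ _)) hint.integrableOn ?_
      have h1 : ∀ᵐ x ∂(P₁.restrict Aᶜ), 0 < p₀ x := ae_restrict_of_ae hq0P₁
      have h2 : ∀ᵐ x ∂(P₁.restrict Aᶜ), x ∈ Aᶜ := ae_restrict_mem hA.compl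
      filter_upwards [h1, h2] with x hx1 hx2
      have hx3 : 2 * p₀ x < p₁ x := by
        have : ¬ (p₁ x ≤ 2 * p₀ x) := hx2
        linarith [not_le.1 this]
      have hx4 : (2:ℝ) ≤ p₁ x / p₀ x := by rw [le_div_iff₀ hx1]; linarith
      have : Real.log 2 ≤ Real.log (p₁ x / p₀ x) :=
        (Real.log_le_log_iff (by norm_num) (by linarith)).2 hx4
      exact this
    have hsplit : ∫ x in A, f x ∂P₁ + ∫ x in Aᶜ, f x ∂P₁ = K := by
      rw [hK]; exact integral_add_compl hA hint
    have hAfge : -(Real.sqrt K) ≤ ∫ x in A, f x ∂P₁ := by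
      have h7 : ∫ x in A, (-(max (-(f x)) 0)) ∂P₁ ≤ ∫ x in A, f x ∂P₁ := by
        refine setIntegral_mono hfneg_intP.neg.integrableOn hint.integrableOn fun x => ?_
        have := le_max_left (-(f x)) 0
        linarith
      have h8 : ∫ x in A, (-(max (-(f x)) 0)) ∂P₁ = -∫ x in A, max (-(f x)) 0 ∂P₁ :=
        integral_neg _
      have h9 : ∫ x in A, max (-(f x)) 0 ∂P₁ ≤ ∫ x, max (-(f x)) 0 ∂P₁ :=
        setIntegral_le_integral hfneg_intP (ae_of_all _ fun x => le_max_right _ _)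
      linarith [hInegP]
    calc Real.log 2 * (P₁ Aᶜ).toReal = (P₁ Aᶜ).toReal * Real.log 2 := mul_comm _ _
      _ = ∫ _ in Aᶜ, Real.log 2 ∂P₁ := hconst.symm
      _ ≤ ∫ x in Aᶜ, f x ∂P₁ := hmono
      _ = K - ∫ x in A, f x ∂P₁ := by linarith [hsplit]
      _ ≤ K + Real.sqrt K := by linarith [hAfge]
  have hcompl : (P₁ A).toReal + (P₁ Aᶜ).toReal = 1 := by
    rw [← ENNReal.toReal_add (measure_ne_top _ _) (measure_ne_top _ _),
      measure_add_measure_compl hA, measure_univ, ENNReal.toReal_one]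
  -- testing bound
  have hbound : ∀ B : Set X, MeasurableSet B →
      (P₁ A).toReal ≤ 2 * (P₀ B).toReal + (P₁ Bᶜ).toReal := by
    intro B hB
    have h1 : P₁ (A ∩ B) ≤ 2 * P₀ B := by
      rw [hP₁s _ (hA.inter hB), hP₀s _ hB]
      calc ∫⁻ x in A ∩ B, ENNReal.ofReal (p₁ x) ∂μ
          ≤ ∫⁻ x in A ∩ B, 2 * ENNReal.ofReal (p₀ x) ∂μ := by
            refine setLIntegral_mono (hp₀m.ennreal_ofReal.const_mul 2) fun x hx => ?_
            have hx1 : p₁ x ≤ 2 * p₀ x := hx.1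
            calc ENNReal.ofReal (p₁ x) ≤ ENNReal.ofReal (2 * p₀ x) :=
                ENNReal.ofReal_le_ofReal hx1
              _ = 2 * ENNReal.ofReal (p₀ x) := by
                  rw [ENNReal.ofReal_mul (by norm_num : (0:ℝ) ≤ 2)]
                  norm_num
        _ = 2 * ∫⁻ x in A ∩ B, ENNReal.ofReal (p₀ x) ∂μ :=
            lintegral_const_mul 2 hp₀m.ennreal_ofReal
        _ ≤ 2 * ∫⁻ x in B, ENNReal.ofReal (p₀ x) ∂μ := by
            gcongr
            exact Set.inter_subset_right
    have h2 : P₁ A ≤ P₁ (A ∩ B) + P₁ (A ∩ Bᶜ) := by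
      have : A = (A ∩ B) ∪ (A ∩ Bᶜ) := by
        rw [← Set.inter_union_distrib_left, Set.union_compl_self, Set.inter_univ]
      calc P₁ A = P₁ ((A ∩ B) ∪ (A ∩ Bᶜ)) := by rw [← this]
        _ ≤ P₁ (A ∩ B) + P₁ (A ∩ Bᶜ) := measure_union_le _ _
    have h3 : P₁ (A ∩ Bᶜ) ≤ P₁ Bᶜ := measure_mono Set.inter_subset_right
    have h4 : P₁ A ≤ 2 * P₀ B + P₁ Bᶜ := le_trans h2 (add_le_add h1 h3)
    have hne : (2 : ℝ≥0∞) * P₀ B + P₁ Bᶜ ≠ ⊤ :=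
      ENNReal.add_ne_top.2 ⟨ENNReal.mul_ne_top (by norm_num) (measure_ne_top _ _),
        measure_ne_top _ _⟩
    have h5 := ENNReal.toReal_mono hne h4
    rw [ENNReal.toReal_add (ENNReal.mul_ne_top (by norm_num) (measure_ne_top _ _))
      (measure_ne_top _ _), ENNReal.toReal_mul] at h5
    simpa using h5
  -- conclusion
  have hlog2 : (0:ℝ) < Real.log 2 := Real.log_pos one_lt_two
  have hsqK : Real.sqrt K ≤ Real.sqrt (2*K) := Real.sqrt_le_sqrt (by linarith)
  have hAcle : (P₁ Aᶜ).toReal ≤ (K + Real.sqrt (2*K)) / Real.log 2 := by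
    rw [le_div_iff₀ hlog2]
    calc (P₁ Aᶜ).toReal * Real.log 2 = Real.log 2 * (P₁ Aᶜ).toReal := mul_comm _ _
      _ ≤ K + Real.sqrt K := hmark
      _ ≤ K + Real.sqrt (2*K) := by linarith
  have main : ∀ B : Set X, MeasurableSet B →
      (1/3) * (1 - (K + Real.sqrt (2*K))/Real.log 2)
        ≤ max (P₀ B).toReal (P₁ Bᶜ).toReal := by
    intro B hB
    have h1 := hbound B hB
    have h2 : (P₀ B).toReal ≤ max (P₀ B).toReal (P₁ Bᶜ).toReal := le_max_left _ _
    have h3 : (P₁ Bᶜ).toReal ≤ max (P₀ B).toReal (P₁ Bᶜ).toReal := le_max_right _ _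
    linarith [hcompl, hAcle]
  refine ⟨main, 1/100, by norm_num, fun hKle B hB => ?_⟩
  have h1 := main B hB
  have hs : Real.sqrt (2*K) ≤ 3/20 := by
    rw [show (3:ℝ)/20 = Real.sqrt ((3/20)^2) from (Real.sqrt_sq (by norm_num : (0:ℝ) ≤ 3/20)).symm]
    exact Real.sqrt_le_sqrt (by nlinarith)
  have hlog2' := Real.log_two_gt_d9
  have hlt : (K + Real.sqrt (2*K)) / Real.log 2 < 1/4 := by
    rw [div_lt_iff₀ hlog2]
    nlinarith
  linarith
end

section
/- Let p, q, r, s ∈ ℝ with p ≤ r and q ≥ s, and let (c_{jk})_{j,k≥1} be real numbers such that for some M ≥ 0 and for every j ≥ 1, Σ_{k≥1} (1+λ_k)^{q} c_{jk}² ≤ M² (1+λ_j)^{p−(d−1)}. Then ‖c‖_{r,s} is finite and satisfies ‖c‖_{r,s} ≤ C M for a constant C > 0 depending only on d, C₁, C₂ and the differences r − p and q − s. -/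
open scoped ENNReal NNReal

/-- Coefficient form of the first part of Lemma B.2: if the operator with coefficient
array `c` maps `H^{p-(d-1)}` to `H^q` with norm at most `M` on the basis vectors (the
row-sum hypothesis), and `p ≤ r`, `q ≥ s`, then the weighted Hilbert–Schmidt norm
`‖c‖_{r,s}` is finite and bounded by `C·M`, with `C` depending only on `d`, `C₁`, `C₂`
and the differences `a = r − p`, `b = q − s`. Here `lam k` stands for the eigenvalue
`λ_{k+1}` (0-based indexing), satisfying the Weyl-law two-sided bound. The conclusion is
stated in `ℝ≥0∞`, so finiteness of the norm is part of the claim. -/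
theorem stmt_5 (d : ℕ) (hd : 2 ≤ d) (C₁ C₂ : ℝ) (hC₁ : 0 < C₁) (hC₂ : 0 < C₂)
    (a b : ℝ) :
    ∃ C : ℝ, 0 < C ∧
      ∀ lam : ℕ → ℝ,
        (∀ k : ℕ, C₁ * ((k : ℝ) + 1) ^ (2 / ((d : ℝ) - 1)) ≤ lam k ∧
            lam k ≤ C₂ * ((k : ℝ) + 1) ^ (2 / ((d : ℝ) - 1))) →
        ∀ p q r s : ℝ, p ≤ r → s ≤ q → r - p = a → q - s = b →
        ∀ M : ℝ, 0 ≤ M →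
        ∀ c : ℕ → ℕ → ℝ,
          (∀ j : ℕ, ∑' k : ℕ, ENNReal.ofReal ((1 + lam k) ^ q * c j k ^ 2)
              ≤ ENNReal.ofReal (M ^ 2 * (1 + lam j) ^ (p - ((d : ℝ) - 1)))) →
          (∑' jk : ℕ × ℕ, ENNReal.ofReal
              ((1 + lam jk.1) ^ (-r) * (1 + lam jk.2) ^ s * c jk.1 jk.2 ^ 2)) ^ ((1 : ℝ) / 2)
            ≤ ENNReal.ofReal (C * M) := by
  have hd2 : (2:ℝ) ≤ (d:ℝ) := by exact_mod_cast hd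
  set D : ℝ := (d : ℝ) - 1 with hDdef
  have hD1 : 1 ≤ D := by simp only [hDdef]; linarith
  have hD0 : (0:ℝ) < D := lt_of_lt_of_le one_pos hD1
  set m : ℝ := min 1 C₁ with hmdef
  have hm0 : 0 < m := lt_min one_pos hC₁
  have hmC : m ≤ C₁ := min_le_right _ _
  set K : ℝ := 3 * m ^ (-D) with hKdef
  have hK0 : 0 < K := by
    have : (0:ℝ) < m ^ (-D) := Real.rpow_pos_of_pos hm0 _
    positivity
  refine ⟨Real.sqrt K, Real.sqrt_pos.2 hK0, ?_⟩
  intro lam hlam p q r s hpr hsq hrp hqs M hM c hrow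
  have hlam0 : ∀ k, 0 < lam k := fun k =>
    lt_of_lt_of_le (by positivity) (hlam k).1
  have hx1 : ∀ k, (1:ℝ) ≤ 1 + lam k := fun k => by linarith [hlam0 k]
  have hx0 : ∀ k, (0:ℝ) < 1 + lam k := fun k => lt_of_lt_of_le one_pos (hx1 k)
  -- key pointwise bound on the j-weight
  have hpow : ∀ j : ℕ, (1 + lam j) ^ (p - D - r) ≤ m ^ (-D) * ((j:ℝ) + 1) ^ (-2 : ℝ) := by
    intro j
    set t : ℝ := ((j:ℝ) + 1) ^ (2 / D) with htdef
    have ht0 : 0 < t := Real.rpow_pos_of_pos (by positivity) _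
    have hmt0 : 0 < m * t := by positivity
    have hmt : m * t ≤ 1 + lam j := by
      have h1 : m * t ≤ C₁ * t := by nlinarith
      have h2 : C₁ * t ≤ lam j := (hlam j).1
      linarith
    have stepA : (1 + lam j) ^ (p - D - r) ≤ (1 + lam j) ^ (-D) :=
      Real.rpow_le_rpow_of_exponent_le (hx1 j) (by linarith)
    have stepB : (1 + lam j) ^ (-D) ≤ (m * t) ^ (-D) := by
      rw [Real.rpow_neg (le_of_lt hmt0), Real.rpow_neg (le_of_lt (hx0 j))]
      have hbase : (m * t) ^ D ≤ (1 + lam j) ^ D :=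
        Real.rpow_le_rpow (le_of_lt hmt0) hmt (le_of_lt hD0)
      have hp0 : (0:ℝ) < (m * t) ^ D := Real.rpow_pos_of_pos hmt0 _
      exact inv_anti₀ hp0 hbase
    have stepC : (m * t) ^ (-D) = m ^ (-D) * ((j:ℝ) + 1) ^ (-2 : ℝ) := by
      rw [Real.mul_rpow (le_of_lt hm0) (le_of_lt ht0)]
      congr 1
      rw [htdef, ← Real.rpow_mul (by positivity : (0:ℝ) ≤ (j:ℝ) + 1)]
      congr 1
      field_simp
    calc (1 + lam j) ^ (p - D - r) ≤ (1 + lam j) ^ (-D) := stepA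
      _ ≤ (m * t) ^ (-D) := stepB
      _ = m ^ (-D) * ((j:ℝ) + 1) ^ (-2 : ℝ) := stepC
  -- per-row bound
  have hrowbound : ∀ j : ℕ,
      (∑' k : ℕ, ENNReal.ofReal ((1 + lam j) ^ (-r) * (1 + lam k) ^ s * c j k ^ 2))
        ≤ ENNReal.ofReal (M ^ 2 * m ^ (-D)) * ENNReal.ofReal (((j:ℝ) + 1) ^ (-2 : ℝ)) := by
    intro j
    have hA : (0:ℝ) ≤ (1 + lam j) ^ (-r) := le_of_lt (Real.rpow_pos_of_pos (hx0 j) _)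
    have step1 : (∑' k : ℕ, ENNReal.ofReal ((1 + lam j) ^ (-r) * (1 + lam k) ^ s * c j k ^ 2))
        = ENNReal.ofReal ((1 + lam j) ^ (-r)) *
          ∑' k : ℕ, ENNReal.ofReal ((1 + lam k) ^ s * c j k ^ 2) := by
      rw [← ENNReal.tsum_mul_left]
      congr 1; funext k
      rw [← ENNReal.ofReal_mul hA, mul_assoc]
    have step2 : (∑' k : ℕ, ENNReal.ofReal ((1 + lam k) ^ s * c j k ^ 2))
        ≤ ∑' k : ℕ, ENNReal.ofReal ((1 + lam k) ^ q * c j k ^ 2) := by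
      refine ENNReal.tsum_le_tsum fun k => ENNReal.ofReal_le_ofReal ?_
      exact mul_le_mul_of_nonneg_right
        (Real.rpow_le_rpow_of_exponent_le (hx1 k) hsq) (sq_nonneg _)
    have step3 := (step2.trans (hrow j))
    calc (∑' k : ℕ, ENNReal.ofReal ((1 + lam j) ^ (-r) * (1 + lam k) ^ s * c j k ^ 2))
        = ENNReal.ofReal ((1 + lam j) ^ (-r)) *
          ∑' k : ℕ, ENNReal.ofReal ((1 + lam k) ^ s * c j k ^ 2) := step1
      _ ≤ ENNReal.ofReal ((1 + lam j) ^ (-r)) *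
          ENNReal.ofReal (M ^ 2 * (1 + lam j) ^ (p - D)) :=
            mul_le_mul_right step3 _
      _ = ENNReal.ofReal ((1 + lam j) ^ (-r) * (M ^ 2 * (1 + lam j) ^ (p - D))) :=
            (ENNReal.ofReal_mul hA).symm
      _ = ENNReal.ofReal (M ^ 2 * (1 + lam j) ^ (p - D - r)) := by
            congr 1
            rw [show p - D - r = (-r) + (p - D) by ring,
              Real.rpow_add (hx0 j)]
            ring
      _ ≤ ENNReal.ofReal (M ^ 2 * (m ^ (-D) * ((j:ℝ) + 1) ^ (-2 : ℝ))) :=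
            ENNReal.ofReal_le_ofReal
              (mul_le_mul_of_nonneg_left (hpow j) (sq_nonneg M))
      _ = ENNReal.ofReal (M ^ 2 * m ^ (-D)) * ENNReal.ofReal (((j:ℝ) + 1) ^ (-2 : ℝ)) := by
            rw [← ENNReal.ofReal_mul (by positivity), mul_assoc]
  -- Basel-type bound
  have hbasel : (∑' j : ℕ, ENNReal.ofReal (((j:ℝ) + 1) ^ (-2 : ℝ)))
      ≤ ENNReal.ofReal 3 := by
    have heq : ∀ j : ℕ, ENNReal.ofReal (((j:ℝ) + 1) ^ (-2 : ℝ))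
        = ENNReal.ofReal (1 / ((j + 1 : ℕ) : ℝ) ^ 2) := by
      intro j
      congr 1
      rw [Real.rpow_neg (by positivity), show ((2:ℝ)) = ((2:ℕ):ℝ) by norm_num,
        Real.rpow_natCast]
      push_cast
      ring
    simp_rw [heq]
    have hinj : Function.Injective (fun j : ℕ => j + 1) := fun x y h => by
      simpa using h
    have hle : (∑' j : ℕ, ENNReal.ofReal (1 / ((j + 1 : ℕ) : ℝ) ^ 2))
        ≤ ∑' n : ℕ, ENNReal.ofReal (1 / (n : ℝ) ^ 2) :=
      ENNReal.tsum_comp_le_tsum_of_injective hinj _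
    refine hle.trans ?_
    have hsum := hasSum_zeta_two
    have : (∑' n : ℕ, ENNReal.ofReal (1 / (n : ℝ) ^ 2))
        = ENNReal.ofReal (Real.pi ^ 2 / 6) := by
      rw [← hsum.tsum_eq]
      exact (ENNReal.ofReal_tsum_of_nonneg (fun n => by positivity) hsum.summable).symm
    rw [this]
    refine ENNReal.ofReal_le_ofReal ?_
    nlinarith [Real.pi_le_four, Real.pi_pos]
  -- combine
  have htotal : (∑' jk : ℕ × ℕ, ENNReal.ofReal
      ((1 + lam jk.1) ^ (-r) * (1 + lam jk.2) ^ s * c jk.1 jk.2 ^ 2))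
      ≤ ENNReal.ofReal (K * M ^ 2) := by
    rw [ENNReal.tsum_prod
      (f := fun j k => ENNReal.ofReal ((1 + lam j) ^ (-r) * (1 + lam k) ^ s * c j k ^ 2))]
    calc (∑' j : ℕ, ∑' k : ℕ, ENNReal.ofReal
          ((1 + lam j) ^ (-r) * (1 + lam k) ^ s * c j k ^ 2))
        ≤ ∑' j : ℕ, ENNReal.ofReal (M ^ 2 * m ^ (-D)) *
            ENNReal.ofReal (((j:ℝ) + 1) ^ (-2:ℝ)) :=
          ENNReal.tsum_le_tsum hrowbound
      _ = ENNReal.ofReal (M ^ 2 * m ^ (-D)) *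
            ∑' j : ℕ, ENNReal.ofReal (((j:ℝ) + 1) ^ (-2:ℝ)) := ENNReal.tsum_mul_left
      _ ≤ ENNReal.ofReal (M ^ 2 * m ^ (-D)) * ENNReal.ofReal 3 :=
          mul_le_mul_right hbasel _
      _ = ENNReal.ofReal (K * M ^ 2) := by
          rw [← ENNReal.ofReal_mul (by positivity), hKdef]
          ring_nf
  calc (∑' jk : ℕ × ℕ, ENNReal.ofReal
        ((1 + lam jk.1) ^ (-r) * (1 + lam jk.2) ^ s * c jk.1 jk.2 ^ 2)) ^ ((1:ℝ)/2)
      ≤ (ENNReal.ofReal (K * M ^ 2)) ^ ((1:ℝ)/2) :=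
        ENNReal.rpow_le_rpow htotal (by norm_num)
    _ = ENNReal.ofReal ((K * M ^ 2) ^ ((1:ℝ)/2)) :=
        ENNReal.ofReal_rpow_of_nonneg (by positivity) (by norm_num)
    _ = ENNReal.ofReal (Real.sqrt K * M) := by
        congr 1
        rw [← Real.rpow_natCast M 2]
        rw [← Real.sqrt_eq_rpow]
        rw [Real.sqrt_mul (le_of_lt hK0)]
        congr 1
        rw [Real.rpow_natCast]
        exact Real.sqrt_sq hM
end

section
/- Let p, q, r, s ∈ ℝ with p ≤ r and q ≥ s, and let (c_{jk})_{j,k≥1} be real numbers such that for some M ≥ 0 and for every j ≥ 1, Σ_{k≥1} (1+λ_k)^{q} c_{jk}² ≤ M² (1+λ_j)^{p−(d−1)}. Then for all integers J, K ≥ 1, the tail sum satisfies (Σ_{(j,k): j>J or k>K} (1+λ_j)^{−r} (1+λ_k)^{s} c_{jk}²)^{1/2} ≤ C M max((1 + J^{1/(d−1)})^{p−r}, (1 + K^{1/(d−1)})^{s−q}) for a constant C > 0 depending only on d, C₁, C₂ and the differences r − p and q − s. -/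
open scoped ENNReal NNReal


lemma helper_sum_inv_sq (n : ℕ) :
    ∑ i ∈ Finset.range n, (((i : ℝ) + 1) ^ 2)⁻¹ ≤ 2 - 2 / ((n : ℝ) + 1) := by
  induction n with
  | zero => simp
  | succ n ih =>
    rw [Finset.sum_range_succ]
    have h1 : (0:ℝ) < (n:ℝ) + 1 := by positivity
    have h2 : (0:ℝ) < (n:ℝ) + 1 + 1 := by positivity
    have key : (((n:ℝ) + 1) ^ 2)⁻¹ + 2 / ((n:ℝ) + 1 + 1) ≤ 2 / ((n:ℝ) + 1) := by
      rw [inv_eq_one_div, div_add_div _ _ (by positivity) h2.ne', div_le_div_iff₀ (by positivity) h1]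
      ring_nf
      nlinarith [sq_nonneg ((n:ℝ)+1)]
    push_cast
    linarith

lemma helper_tsum_inv_sq :
    ∑' n : ℕ, ENNReal.ofReal ((((n : ℝ) + 1) ^ 2)⁻¹) ≤ 2 := by
  apply ENNReal.tsum_le_of_sum_range_le
  intro n
  rw [← ENNReal.ofReal_sum_of_nonneg (fun i _ => by positivity)]
  calc ENNReal.ofReal (∑ i ∈ Finset.range n, (((i : ℝ) + 1) ^ 2)⁻¹)
      ≤ ENNReal.ofReal 2 := by
        apply ENNReal.ofReal_le_ofReal
        have h : 0 ≤ 2 / ((n:ℝ)+1) := by positivity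
        linarith [helper_sum_inv_sq n]
    _ = 2 := by norm_num

-- (1+x)^(-u) ≤ c₀^u * (X^(-u))^2 where X = 1 + N^{1/(d-1)}, when C₁ N^{2/(d-1)} ≤ x
lemma helper_aux {d : ℕ} (hd1 : (1:ℝ) ≤ (d:ℝ) - 1) {C₁ : ℝ} (hC₁ : 0 < C₁) {u : ℝ} (hu : 0 ≤ u)
    {N : ℕ} (hN : 1 ≤ N) {x : ℝ} (hx : C₁ * ((N:ℝ)) ^ (2 / ((d:ℝ) - 1)) ≤ x) :
    (1 + x) ^ (-u) ≤ (4 * max 1 (1/C₁)) ^ u *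
      ((1 + (N:ℝ) ^ (1 / ((d:ℝ) - 1))) ^ (-u)) ^ 2 := by
  set c₀ : ℝ := 4 * max 1 (1/C₁) with hc₀def
  have hc₀4 : (4:ℝ) ≤ c₀ := by
    have : (1:ℝ) ≤ max 1 (1/C₁) := le_max_left _ _
    nlinarith
  have hc₀C : 4 / C₁ ≤ c₀ := by
    have h := le_max_right (1:ℝ) (1/C₁)
    rw [div_le_iff₀ hC₁] at *
    nlinarith [le_max_right (1:ℝ) (1/C₁)]
  have hNr : (1:ℝ) ≤ (N:ℝ) := by exact_mod_cast hN
  set t : ℝ := (N:ℝ) ^ (1 / ((d:ℝ) - 1)) with htdef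
  have ht1 : (1:ℝ) ≤ t := Real.one_le_rpow hNr (by positivity)
  have ht2 : t * t = (N:ℝ) ^ (2 / ((d:ℝ) - 1)) := by
    rw [htdef, ← Real.rpow_add (by linarith : (0:ℝ) < (N:ℝ))]
    congr 1; ring
  set X : ℝ := 1 + t with hXdef
  have hX0 : 0 < X := by linarith
  have hxpos : 0 < x := lt_of_lt_of_le (by positivity) hx
  have key : X * X ≤ c₀ * (1 + x) := by
    have h1 : X * X ≤ 4 * (t * t) := by nlinarith
    have h2 : t * t ≤ x / C₁ := by
      rw [le_div_iff₀ hC₁]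
      calc t * t * C₁ = C₁ * (t * t) := by ring
        _ = C₁ * (N:ℝ) ^ (2 / ((d:ℝ) - 1)) := by rw [ht2]
        _ ≤ x := hx
    have h3 : 4 * (x / C₁) ≤ (4 / C₁) * (1 + x) := by
      rw [mul_div_assoc', div_mul_eq_mul_div, div_le_div_iff₀ hC₁ hC₁]
      nlinarith
    calc X * X ≤ 4 * (t * t) := h1
      _ ≤ 4 * (x / C₁) := by linarith
      _ ≤ (4 / C₁) * (1 + x) := h3
      _ ≤ c₀ * (1 + x) := by nlinarith
  -- now conclude
  have hXu : 0 < X ^ u := Real.rpow_pos_of_pos hX0 u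
  have h1x : 0 < (1 + x) ^ u := Real.rpow_pos_of_pos (by linarith) u
  rw [Real.rpow_neg (by linarith : (0:ℝ) ≤ 1 + x), Real.rpow_neg hX0.le]
  rw [show (c₀ ^ u * ((X ^ u)⁻¹) ^ 2 : ℝ) = c₀ ^ u / (X ^ u) ^ 2 by ring]
  rw [inv_eq_one_div, div_le_div_iff₀ h1x (by positivity)]
  have : (X ^ u) ^ 2 = (X * X) ^ u := by
    rw [Real.mul_rpow hX0.le hX0.le]; ring
  rw [one_mul, this]
  calc (X * X) ^ u ≤ (c₀ * (1 + x)) ^ u := Real.rpow_le_rpow (by positivity) key hu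
    _ = c₀ ^ u * (1 + x) ^ u := Real.mul_rpow (by positivity) (by linarith)

-- (1+x)^(-(d-1)) ≤ C₁^(1-d) * (j+1)^(-2)  as inverse-square form
lemma helper_aux2 {d : ℕ} (hd1 : (1:ℝ) ≤ (d:ℝ) - 1) {C₁ : ℝ} (hC₁ : 0 < C₁)
    {j : ℕ} {x : ℝ} (hx : C₁ * ((j:ℝ) + 1) ^ (2 / ((d:ℝ) - 1)) ≤ x) :
    (1 + x) ^ (-((d:ℝ) - 1)) ≤ C₁ ^ ((1:ℝ) - (d:ℝ)) * (((j:ℝ) + 1) ^ 2)⁻¹ := by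
  have hj1 : (0:ℝ) < (j:ℝ) + 1 := by positivity
  have hy : (0:ℝ) < ((j:ℝ) + 1) ^ (2 / ((d:ℝ) - 1)) := Real.rpow_pos_of_pos hj1 _
  have hbase : 0 < C₁ * ((j:ℝ) + 1) ^ (2 / ((d:ℝ) - 1)) := by positivity
  have h1 : (1 + x) ^ (-((d:ℝ) - 1)) ≤ (C₁ * ((j:ℝ) + 1) ^ (2 / ((d:ℝ) - 1))) ^ (-((d:ℝ) - 1)) :=
    Real.rpow_le_rpow_of_nonpos hbase (by linarith) (by linarith)
  have h2 : (C₁ * ((j:ℝ) + 1) ^ (2 / ((d:ℝ) - 1))) ^ (-((d:ℝ) - 1))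
      = C₁ ^ ((1:ℝ) - (d:ℝ)) * (((j:ℝ) + 1) ^ 2)⁻¹ := by
    rw [Real.mul_rpow hC₁.le hy.le]
    congr 1
    · congr 1; ring
    · rw [← Real.rpow_natCast ((j:ℝ)+1) 2, ← Real.rpow_neg hj1.le,
        ← Real.rpow_mul hj1.le]
      congr 1
      have hdne : (d:ℝ) - 1 ≠ 0 := by linarith
      field_simp
      ring
  linarith [h2 ▸ h1]


/-- Coefficient form of the second part of Lemma B.2: under the same row-sum operator-norm
hypothesis as in the first part, the tail of the weighted Hilbert–Schmidt norm beyond the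
finite-rank projection onto indices `j ≤ J`, `k ≤ K` (0-based: `jk.1 < J`, `jk.2 < K`) is
bounded by `C·M·max((1+J^{1/(d-1)})^{p-r}, (1+K^{1/(d-1)})^{s-q})`, with `C` depending
only on `d`, `C₁`, `C₂` and the differences `a = r − p`, `b = q − s`. Here `lam k` stands
for the eigenvalue `λ_{k+1}` (0-based indexing), satisfying the Weyl-law two-sided bound. -/
theorem stmt_6 (d : ℕ) (hd : 2 ≤ d) (C₁ C₂ : ℝ) (hC₁ : 0 < C₁) (hC₂ : 0 < C₂)
    (a b : ℝ) :
    ∃ C : ℝ, 0 < C ∧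
      ∀ lam : ℕ → ℝ,
        (∀ k : ℕ, C₁ * ((k : ℝ) + 1) ^ (2 / ((d : ℝ) - 1)) ≤ lam k ∧
            lam k ≤ C₂ * ((k : ℝ) + 1) ^ (2 / ((d : ℝ) - 1))) →
        ∀ p q r s : ℝ, p ≤ r → s ≤ q → r - p = a → q - s = b →
        ∀ M : ℝ, 0 ≤ M →
        ∀ c : ℕ → ℕ → ℝ,
          (∀ j : ℕ, ∑' k : ℕ, ENNReal.ofReal ((1 + lam k) ^ q * c j k ^ 2)
              ≤ ENNReal.ofReal (M ^ 2 * (1 + lam j) ^ (p - ((d : ℝ) - 1)))) →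
          ∀ J K : ℕ, 1 ≤ J → 1 ≤ K →
            (∑' jk : ℕ × ℕ,
                if J ≤ jk.1 ∨ K ≤ jk.2 then
                  ENNReal.ofReal
                    ((1 + lam jk.1) ^ (-r) * (1 + lam jk.2) ^ s * c jk.1 jk.2 ^ 2)
                else 0) ^ ((1 : ℝ) / 2)
              ≤ ENNReal.ofReal (C * M *
                  max ((1 + (J : ℝ) ^ (1 / ((d : ℝ) - 1))) ^ (p - r))
                    ((1 + (K : ℝ) ^ (1 / ((d : ℝ) - 1))) ^ (s - q))) := by
  have hd1 : (1:ℝ) ≤ (d:ℝ) - 1 := by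
    have : (2:ℝ) ≤ (d:ℝ) := by exact_mod_cast hd
    linarith
  set c₀ : ℝ := 4 * max 1 (1/C₁) with hc₀def
  have hc₀pos : 0 < c₀ := by positivity
  set C : ℝ := Real.sqrt (2 * C₁ ^ ((1:ℝ) - (d:ℝ)) * (c₀ ^ a + c₀ ^ b)) with hCdef
  have hCsq : C ^ 2 = 2 * C₁ ^ ((1:ℝ) - (d:ℝ)) * (c₀ ^ a + c₀ ^ b) := by
    rw [hCdef, Real.sq_sqrt (by positivity)]
  refine ⟨C, by rw [hCdef]; apply Real.sqrt_pos.mpr; positivity, ?_⟩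
  intro lam hlam p q r s hpr hsq hrp hqs M hM c hrow J K hJ hK
  have ha : 0 ≤ a := by rw [← hrp]; linarith
  have hb : 0 ≤ b := by rw [← hqs]; linarith
  have hpra : p - r = -a := by linarith
  have hsqb : s - q = -b := by linarith
  have hlampos : ∀ k, 0 < lam k := fun k =>
    lt_of_lt_of_le (by positivity) (hlam k).1
  have h1l : ∀ k, (0:ℝ) < 1 + lam k := fun k => by linarith [hlampos k]
  set X : ℝ := 1 + (J:ℝ) ^ (1 / ((d:ℝ) - 1)) with hXdef
  set Y : ℝ := 1 + (K:ℝ) ^ (1 / ((d:ℝ) - 1)) with hYdef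
  have hX0 : 0 < X := by rw [hXdef]; positivity
  have hY0 : 0 < Y := by rw [hYdef]; positivity
  set CD : ℝ := C₁ ^ ((1:ℝ) - (d:ℝ)) with hCDdef
  have hCD0 : 0 < CD := Real.rpow_pos_of_pos hC₁ _
  have hr0 : ∀ j : ℕ, (0:ℝ) ≤ (1 + lam j) ^ (-r) := fun j => Real.rpow_nonneg (h1l j).le _
  have hca2 : (0:ℝ) ≤ c₀ ^ a * (X ^ (-a)) ^ 2 :=
    mul_nonneg (Real.rpow_nonneg hc₀pos.le _) (sq_nonneg _)
  have hcb2 : (0:ℝ) ≤ c₀ ^ b * (Y ^ (-b)) ^ 2 :=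
    mul_nonneg (Real.rpow_nonneg hc₀pos.le _) (sq_nonneg _)
  have hEA0 : (0:ℝ) ≤ c₀ ^ a * (X ^ (-a)) ^ 2 * CD * M ^ 2 :=
    mul_nonneg (mul_nonneg hca2 hCD0.le) (sq_nonneg _)
  have hEB0 : (0:ℝ) ≤ c₀ ^ b * (Y ^ (-b)) ^ 2 * CD * M ^ 2 :=
    mul_nonneg (mul_nonneg hcb2 hCD0.le) (sq_nonneg _)
  -- row sums with exponent s instead of q
  have hrowS : ∀ j, (∑' k, ENNReal.ofReal ((1 + lam k) ^ s * c j k ^ 2))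
      ≤ ENNReal.ofReal (M ^ 2 * (1 + lam j) ^ (p - ((d:ℝ) - 1))) := by
    intro j
    refine le_trans (ENNReal.tsum_le_tsum fun k => ?_) (hrow j)
    apply ENNReal.ofReal_le_ofReal
    apply mul_le_mul_of_nonneg_right _ (sq_nonneg _)
    exact Real.rpow_le_rpow_of_exponent_le (by linarith [hlampos k]) hsq
  -- exponent splitting identity
  have e1 : ∀ j, (1 + lam j) ^ (-r) * (1 + lam j) ^ (p - ((d:ℝ) - 1))
      = (1 + lam j) ^ (-a) * (1 + lam j) ^ (-((d:ℝ) - 1)) := by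
    intro j
    rw [← Real.rpow_add (h1l j), ← Real.rpow_add (h1l j)]
    congr 1
    rw [← hrp]; ring
  -- Region A
  have hA : (∑' jk : ℕ × ℕ, if J ≤ jk.1 then
        ENNReal.ofReal ((1 + lam jk.1) ^ (-r) * (1 + lam jk.2) ^ s * c jk.1 jk.2 ^ 2) else 0)
      ≤ ENNReal.ofReal (2 * CD * c₀ ^ a * (X ^ (-a)) ^ 2 * M ^ 2) := by
    rw [ENNReal.tsum_prod']
    have step1 : ∀ j : ℕ,
        (∑' k, if J ≤ j then
            ENNReal.ofReal ((1 + lam j) ^ (-r) * (1 + lam k) ^ s * c j k ^ 2) else 0)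
        ≤ ENNReal.ofReal ((c₀ ^ a * (X ^ (-a)) ^ 2 * CD * M ^ 2) * (((j:ℝ) + 1) ^ 2)⁻¹) := by
      intro j
      by_cases hj : J ≤ j
      · simp only [if_pos hj]
        have hw : ∀ k, ENNReal.ofReal ((1 + lam j) ^ (-r) * (1 + lam k) ^ s * c j k ^ 2)
            = ENNReal.ofReal ((1 + lam j) ^ (-r)) *
              ENNReal.ofReal ((1 + lam k) ^ s * c j k ^ 2) := fun k => by
          rw [mul_assoc, ENNReal.ofReal_mul (hr0 j)]
        calc (∑' k, ENNReal.ofReal ((1 + lam j) ^ (-r) * (1 + lam k) ^ s * c j k ^ 2))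
            = ENNReal.ofReal ((1 + lam j) ^ (-r)) *
              ∑' k, ENNReal.ofReal ((1 + lam k) ^ s * c j k ^ 2) := by
              rw [tsum_congr hw, ENNReal.tsum_mul_left]
          _ ≤ ENNReal.ofReal ((1 + lam j) ^ (-r)) *
              ENNReal.ofReal (M ^ 2 * (1 + lam j) ^ (p - ((d:ℝ) - 1))) :=
              mul_le_mul_right (hrowS j) _
          _ = ENNReal.ofReal ((1 + lam j) ^ (-r) * (M ^ 2 * (1 + lam j) ^ (p - ((d:ℝ) - 1)))) := by
              rw [← ENNReal.ofReal_mul (hr0 j)]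
          _ ≤ ENNReal.ofReal ((c₀ ^ a * (X ^ (-a)) ^ 2 * CD * M ^ 2) * (((j:ℝ) + 1) ^ 2)⁻¹) := by
              apply ENNReal.ofReal_le_ofReal
              have hxj : C₁ * (J:ℝ) ^ (2 / ((d:ℝ) - 1)) ≤ lam j := by
                refine le_trans ?_ (hlam j).1
                apply mul_le_mul_of_nonneg_left _ hC₁.le
                apply Real.rpow_le_rpow (by positivity) _ (by positivity)
                have : (J:ℝ) ≤ (j:ℝ) := by exact_mod_cast hj
                linarith
              have b1 := helper_aux hd1 hC₁ ha hJ hxj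
              have b2 := helper_aux2 hd1 hC₁ (hlam j).1
              have hnn1 : (0:ℝ) ≤ (1 + lam j) ^ (-a) := Real.rpow_nonneg (h1l j).le _
              have hnn2 : (0:ℝ) ≤ (1 + lam j) ^ (-((d:ℝ) - 1)) := Real.rpow_nonneg (h1l j).le _
              have hnn3 : (0:ℝ) ≤ c₀ ^ a * (X ^ (-a)) ^ 2 := hca2
              calc (1 + lam j) ^ (-r) * (M ^ 2 * (1 + lam j) ^ (p - ((d:ℝ) - 1)))
                  = M ^ 2 * ((1 + lam j) ^ (-a) * (1 + lam j) ^ (-((d:ℝ) - 1))) := by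
                    rw [show (1 + lam j) ^ (-r) * (M ^ 2 * (1 + lam j) ^ (p - ((d:ℝ) - 1)))
                        = M ^ 2 * ((1 + lam j) ^ (-r) * (1 + lam j) ^ (p - ((d:ℝ) - 1))) by ring,
                      e1 j]
                _ ≤ M ^ 2 * ((c₀ ^ a * (X ^ (-a)) ^ 2) * (CD * (((j:ℝ) + 1) ^ 2)⁻¹)) := by
                    apply mul_le_mul_of_nonneg_left _ (sq_nonneg M)
                    exact mul_le_mul b1 b2 hnn2 hnn3
                _ = (c₀ ^ a * (X ^ (-a)) ^ 2 * CD * M ^ 2) * (((j:ℝ) + 1) ^ 2)⁻¹ := by ring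
      · simp [hj]
    calc (∑' j, ∑' k, if J ≤ j then
          ENNReal.ofReal ((1 + lam j) ^ (-r) * (1 + lam k) ^ s * c j k ^ 2) else 0)
        ≤ ∑' j : ℕ, ENNReal.ofReal
            ((c₀ ^ a * (X ^ (-a)) ^ 2 * CD * M ^ 2) * (((j:ℝ) + 1) ^ 2)⁻¹) :=
          ENNReal.tsum_le_tsum step1
      _ = ENNReal.ofReal (c₀ ^ a * (X ^ (-a)) ^ 2 * CD * M ^ 2) *
          ∑' j : ℕ, ENNReal.ofReal ((((j:ℝ) + 1) ^ 2)⁻¹) := by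
          rw [← ENNReal.tsum_mul_left]
          exact tsum_congr fun j => ENNReal.ofReal_mul hEA0
      _ ≤ ENNReal.ofReal (c₀ ^ a * (X ^ (-a)) ^ 2 * CD * M ^ 2) * 2 :=
          mul_le_mul_right helper_tsum_inv_sq _
      _ = ENNReal.ofReal (2 * CD * c₀ ^ a * (X ^ (-a)) ^ 2 * M ^ 2) := by
          rw [show (2:ℝ≥0∞) = ENNReal.ofReal 2 by norm_num,
            ← ENNReal.ofReal_mul hEA0]
          congr 1
          ring
  -- Region B
  have hB : (∑' jk : ℕ × ℕ, if K ≤ jk.2 then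
        ENNReal.ofReal ((1 + lam jk.1) ^ (-r) * (1 + lam jk.2) ^ s * c jk.1 jk.2 ^ 2) else 0)
      ≤ ENNReal.ofReal (2 * CD * c₀ ^ b * (Y ^ (-b)) ^ 2 * M ^ 2) := by
    rw [ENNReal.tsum_prod']
    have step1 : ∀ j : ℕ,
        (∑' k, if K ≤ k then
            ENNReal.ofReal ((1 + lam j) ^ (-r) * (1 + lam k) ^ s * c j k ^ 2) else 0)
        ≤ ENNReal.ofReal ((c₀ ^ b * (Y ^ (-b)) ^ 2 * CD * M ^ 2) * (((j:ℝ) + 1) ^ 2)⁻¹) := by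
      intro j
      have hw : ∀ k, (if K ≤ k then
            ENNReal.ofReal ((1 + lam j) ^ (-r) * (1 + lam k) ^ s * c j k ^ 2) else 0)
          = ENNReal.ofReal ((1 + lam j) ^ (-r)) *
            (if K ≤ k then ENNReal.ofReal ((1 + lam k) ^ s * c j k ^ 2) else 0) := by
        intro k
        split_ifs with hk
        · rw [mul_assoc, ENNReal.ofReal_mul (hr0 j)]
        · rw [mul_zero]
      rw [tsum_congr hw, ENNReal.tsum_mul_left]
      have inner : (∑' k, if K ≤ k then ENNReal.ofReal ((1 + lam k) ^ s * c j k ^ 2) else 0)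
          ≤ ENNReal.ofReal (c₀ ^ b * (Y ^ (-b)) ^ 2) *
            ENNReal.ofReal (M ^ 2 * (1 + lam j) ^ (p - ((d:ℝ) - 1))) := by
        calc (∑' k, if K ≤ k then ENNReal.ofReal ((1 + lam k) ^ s * c j k ^ 2) else 0)
            ≤ ∑' k, ENNReal.ofReal (c₀ ^ b * (Y ^ (-b)) ^ 2) *
                ENNReal.ofReal ((1 + lam k) ^ q * c j k ^ 2) := by
              apply ENNReal.tsum_le_tsum
              intro k
              split_ifs with hk
              · rw [← ENNReal.ofReal_mul hcb2]
                apply ENNReal.ofReal_le_ofReal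
                have hxk : C₁ * (K:ℝ) ^ (2 / ((d:ℝ) - 1)) ≤ lam k := by
                  refine le_trans ?_ (hlam k).1
                  apply mul_le_mul_of_nonneg_left _ hC₁.le
                  apply Real.rpow_le_rpow (by positivity) _ (by positivity)
                  have : (K:ℝ) ≤ (k:ℝ) := by exact_mod_cast hk
                  linarith
                have b1 := helper_aux hd1 hC₁ hb hK hxk
                have hs : (1 + lam k) ^ s ≤ (c₀ ^ b * (Y ^ (-b)) ^ 2) * (1 + lam k) ^ q := by
                  have e2 : (1 + lam k) ^ s = (1 + lam k) ^ (-b) * (1 + lam k) ^ q := by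
                    rw [← Real.rpow_add (h1l k)]
                    congr 1
                    linarith
                  rw [e2]
                  exact mul_le_mul_of_nonneg_right b1 (Real.rpow_nonneg (h1l k).le _)
                calc (1 + lam k) ^ s * c j k ^ 2
                    ≤ ((c₀ ^ b * (Y ^ (-b)) ^ 2) * (1 + lam k) ^ q) * c j k ^ 2 :=
                      mul_le_mul_of_nonneg_right hs (sq_nonneg _)
                  _ = (c₀ ^ b * (Y ^ (-b)) ^ 2) * ((1 + lam k) ^ q * c j k ^ 2) := by ring
              · exact zero_le
          _ = ENNReal.ofReal (c₀ ^ b * (Y ^ (-b)) ^ 2) *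
              ∑' k, ENNReal.ofReal ((1 + lam k) ^ q * c j k ^ 2) := ENNReal.tsum_mul_left
          _ ≤ ENNReal.ofReal (c₀ ^ b * (Y ^ (-b)) ^ 2) *
              ENNReal.ofReal (M ^ 2 * (1 + lam j) ^ (p - ((d:ℝ) - 1))) :=
              mul_le_mul_right (hrow j) _
      calc ENNReal.ofReal ((1 + lam j) ^ (-r)) *
            (∑' k, if K ≤ k then ENNReal.ofReal ((1 + lam k) ^ s * c j k ^ 2) else 0)
          ≤ ENNReal.ofReal ((1 + lam j) ^ (-r)) *
            (ENNReal.ofReal (c₀ ^ b * (Y ^ (-b)) ^ 2) *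
              ENNReal.ofReal (M ^ 2 * (1 + lam j) ^ (p - ((d:ℝ) - 1)))) :=
            mul_le_mul_right inner _
        _ = ENNReal.ofReal ((c₀ ^ b * (Y ^ (-b)) ^ 2 * M ^ 2) *
              ((1 + lam j) ^ (-r) * (1 + lam j) ^ (p - ((d:ℝ) - 1)))) := by
            rw [← ENNReal.ofReal_mul hcb2, ← ENNReal.ofReal_mul (hr0 j)]
            congr 1
            ring
        _ ≤ ENNReal.ofReal ((c₀ ^ b * (Y ^ (-b)) ^ 2 * CD * M ^ 2) * (((j:ℝ) + 1) ^ 2)⁻¹) := by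
            apply ENNReal.ofReal_le_ofReal
            have b2 := helper_aux2 hd1 hC₁ (hlam j).1
            have hle1 : (1 + lam j) ^ (-a) ≤ 1 :=
              Real.rpow_le_one_of_one_le_of_nonpos (by linarith [hlampos j]) (by linarith)
            have hnn2 : (0:ℝ) ≤ (1 + lam j) ^ (-((d:ℝ) - 1)) := Real.rpow_nonneg (h1l j).le _
            have key : (1 + lam j) ^ (-r) * (1 + lam j) ^ (p - ((d:ℝ) - 1))
                ≤ CD * (((j:ℝ) + 1) ^ 2)⁻¹ := by
              rw [e1 j]
              calc (1 + lam j) ^ (-a) * (1 + lam j) ^ (-((d:ℝ) - 1))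
                  ≤ 1 * (CD * (((j:ℝ) + 1) ^ 2)⁻¹) :=
                    mul_le_mul hle1 b2 hnn2 zero_le_one
                _ = CD * (((j:ℝ) + 1) ^ 2)⁻¹ := one_mul _
            have hnn3 : (0:ℝ) ≤ c₀ ^ b * (Y ^ (-b)) ^ 2 * M ^ 2 := mul_nonneg hcb2 (sq_nonneg _)
            calc (c₀ ^ b * (Y ^ (-b)) ^ 2 * M ^ 2) *
                  ((1 + lam j) ^ (-r) * (1 + lam j) ^ (p - ((d:ℝ) - 1)))
                ≤ (c₀ ^ b * (Y ^ (-b)) ^ 2 * M ^ 2) * (CD * (((j:ℝ) + 1) ^ 2)⁻¹) :=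
                  mul_le_mul_of_nonneg_left key hnn3
              _ = (c₀ ^ b * (Y ^ (-b)) ^ 2 * CD * M ^ 2) * (((j:ℝ) + 1) ^ 2)⁻¹ := by ring
    calc (∑' j, ∑' k, if K ≤ k then
          ENNReal.ofReal ((1 + lam j) ^ (-r) * (1 + lam k) ^ s * c j k ^ 2) else 0)
        ≤ ∑' j : ℕ, ENNReal.ofReal
            ((c₀ ^ b * (Y ^ (-b)) ^ 2 * CD * M ^ 2) * (((j:ℝ) + 1) ^ 2)⁻¹) :=
          ENNReal.tsum_le_tsum step1
      _ = ENNReal.ofReal (c₀ ^ b * (Y ^ (-b)) ^ 2 * CD * M ^ 2) *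
          ∑' j : ℕ, ENNReal.ofReal ((((j:ℝ) + 1) ^ 2)⁻¹) := by
          rw [← ENNReal.tsum_mul_left]
          exact tsum_congr fun j => ENNReal.ofReal_mul hEB0
      _ ≤ ENNReal.ofReal (c₀ ^ b * (Y ^ (-b)) ^ 2 * CD * M ^ 2) * 2 :=
          mul_le_mul_right helper_tsum_inv_sq _
      _ = ENNReal.ofReal (2 * CD * c₀ ^ b * (Y ^ (-b)) ^ 2 * M ^ 2) := by
          rw [show (2:ℝ≥0∞) = ENNReal.ofReal 2 by norm_num,
            ← ENNReal.ofReal_mul hEB0]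
          congr 1
          ring
  -- split the tail sum
  have hsplit : (∑' jk : ℕ × ℕ,
        if J ≤ jk.1 ∨ K ≤ jk.2 then
          ENNReal.ofReal ((1 + lam jk.1) ^ (-r) * (1 + lam jk.2) ^ s * c jk.1 jk.2 ^ 2)
        else 0)
      ≤ (∑' jk : ℕ × ℕ, if J ≤ jk.1 then
          ENNReal.ofReal ((1 + lam jk.1) ^ (-r) * (1 + lam jk.2) ^ s * c jk.1 jk.2 ^ 2) else 0)
        + ∑' jk : ℕ × ℕ, if K ≤ jk.2 then
          ENNReal.ofReal ((1 + lam jk.1) ^ (-r) * (1 + lam jk.2) ^ s * c jk.1 jk.2 ^ 2) else 0 := by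
    rw [← ENNReal.tsum_add]
    apply ENNReal.tsum_le_tsum
    intro jk
    rcases Classical.em (J ≤ jk.1) with h1 | h1 <;> rcases Classical.em (K ≤ jk.2) with h2 | h2 <;>
      simp [h1, h2, le_self_add, le_add_self]
  -- combine
  set mx : ℝ := max (X ^ (p - r)) (Y ^ (s - q)) with hmxdef
  have hXeq : X ^ (p - r) = X ^ (-a) := by rw [hpra]
  have hYeq : Y ^ (s - q) = Y ^ (-b) := by rw [hsqb]
  have hmx0 : 0 ≤ mx := le_trans (Real.rpow_nonneg hX0.le _) (le_max_left _ _)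
  have hR : 0 ≤ C * M * mx := by
    apply mul_nonneg (mul_nonneg (Real.sqrt_nonneg _) hM) hmx0
  have hca : (0:ℝ) ≤ c₀ ^ a := Real.rpow_nonneg hc₀pos.le _
  have hcb : (0:ℝ) ≤ c₀ ^ b := Real.rpow_nonneg hc₀pos.le _
  have hEA0' : (0:ℝ) ≤ 2 * CD * c₀ ^ a * (X ^ (-a)) ^ 2 * M ^ 2 :=
    mul_nonneg (mul_nonneg (mul_nonneg (mul_nonneg zero_le_two hCD0.le) hca)
      (sq_nonneg _)) (sq_nonneg _)
  have hEB0' : (0:ℝ) ≤ 2 * CD * c₀ ^ b * (Y ^ (-b)) ^ 2 * M ^ 2 :=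
    mul_nonneg (mul_nonneg (mul_nonneg (mul_nonneg zero_le_two hCD0.le) hcb)
      (sq_nonneg _)) (sq_nonneg _)
  have hfin : 2 * CD * c₀ ^ a * (X ^ (-a)) ^ 2 * M ^ 2
        + 2 * CD * c₀ ^ b * (Y ^ (-b)) ^ 2 * M ^ 2 ≤ (C * M * mx) ^ 2 := by
    have h1 : (X ^ (-a)) ^ 2 ≤ mx ^ 2 := by
      have hle : X ^ (-a) ≤ mx := by
        rw [hmxdef, ← hXeq]; exact le_max_left _ _
      exact pow_le_pow_left₀ (Real.rpow_nonneg hX0.le (-a)) hle 2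
    have h2 : (Y ^ (-b)) ^ 2 ≤ mx ^ 2 := by
      have hle : Y ^ (-b) ≤ mx := by
        rw [hmxdef, ← hYeq]; exact le_max_right _ _
      exact pow_le_pow_left₀ (Real.rpow_nonneg hY0.le (-b)) hle 2
    have hCM : (C * M * mx) ^ 2 = (2 * CD * (c₀ ^ a + c₀ ^ b)) * M ^ 2 * mx ^ 2 := by
      have hexp : (C * M * mx) ^ 2 = C ^ 2 * M ^ 2 * mx ^ 2 := by ring
      rw [hexp, hCsq]
    have t1 : 2 * CD * c₀ ^ a * (X ^ (-a)) ^ 2 * M ^ 2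
        ≤ 2 * CD * c₀ ^ a * mx ^ 2 * M ^ 2 := by
      apply mul_le_mul_of_nonneg_right _ (sq_nonneg M)
      exact mul_le_mul_of_nonneg_left h1
        (mul_nonneg (mul_nonneg zero_le_two hCD0.le) hca)
    have t2 : 2 * CD * c₀ ^ b * (Y ^ (-b)) ^ 2 * M ^ 2
        ≤ 2 * CD * c₀ ^ b * mx ^ 2 * M ^ 2 := by
      apply mul_le_mul_of_nonneg_right _ (sq_nonneg M)
      exact mul_le_mul_of_nonneg_left h2
        (mul_nonneg (mul_nonneg zero_le_two hCD0.le) hcb)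
    rw [hCM]
    calc 2 * CD * c₀ ^ a * (X ^ (-a)) ^ 2 * M ^ 2
          + 2 * CD * c₀ ^ b * (Y ^ (-b)) ^ 2 * M ^ 2
        ≤ 2 * CD * c₀ ^ a * mx ^ 2 * M ^ 2 + 2 * CD * c₀ ^ b * mx ^ 2 * M ^ 2 :=
          add_le_add t1 t2
      _ = (2 * CD * (c₀ ^ a + c₀ ^ b)) * M ^ 2 * mx ^ 2 := by ring
  have htot : (∑' jk : ℕ × ℕ,
        if J ≤ jk.1 ∨ K ≤ jk.2 then
          ENNReal.ofReal ((1 + lam jk.1) ^ (-r) * (1 + lam jk.2) ^ s * c jk.1 jk.2 ^ 2)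
        else 0) ≤ ENNReal.ofReal ((C * M * mx) ^ 2) := by
    calc _ ≤ _ := hsplit
      _ ≤ ENNReal.ofReal (2 * CD * c₀ ^ a * (X ^ (-a)) ^ 2 * M ^ 2)
          + ENNReal.ofReal (2 * CD * c₀ ^ b * (Y ^ (-b)) ^ 2 * M ^ 2) := add_le_add hA hB
      _ = ENNReal.ofReal (2 * CD * c₀ ^ a * (X ^ (-a)) ^ 2 * M ^ 2
          + 2 * CD * c₀ ^ b * (Y ^ (-b)) ^ 2 * M ^ 2) :=
          (ENNReal.ofReal_add hEA0' hEB0').symm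
      _ ≤ ENNReal.ofReal ((C * M * mx) ^ 2) := ENNReal.ofReal_le_ofReal hfin
  calc (∑' jk : ℕ × ℕ,
        if J ≤ jk.1 ∨ K ≤ jk.2 then
          ENNReal.ofReal ((1 + lam jk.1) ^ (-r) * (1 + lam jk.2) ^ s * c jk.1 jk.2 ^ 2)
        else 0) ^ ((1:ℝ)/2)
      ≤ (ENNReal.ofReal ((C * M * mx) ^ 2)) ^ ((1:ℝ)/2) :=
        ENNReal.rpow_le_rpow htot (by norm_num)
    _ = ENNReal.ofReal (((C * M * mx) ^ 2) ^ ((1:ℝ)/2)) :=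
        (ENNReal.ofReal_rpow_of_nonneg (by positivity) (by norm_num))
    _ = ENNReal.ofReal (C * M * mx) := by
        rw [← Real.sqrt_eq_rpow, Real.sqrt_sq hR]
end
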